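/- Let X and Y be topological spaces and h : X ≃ₜ Y a homeomorphism. Let Cyl(h) denote the mapping cylinder of h, i.e., the quotient of the disjoint union (X × [0,1]) ⊕ Y (with the quotient topology) by the relation identifying (x,1) with h(x) for every x ∈ X. Then there is a homeomorphism Φ : X × [0,1] ≃ₜ Cyl(h) such that Φ(x,0) is the class of (x,0) in the X × [0,1] summand and Φ(x,1) is the class of h(x) in the Y summand, for every x ∈ X. -/

import Mathlib

open Set unitInterval

/-- The generating relation for the mapping cylinder of `h : X → Y`: identify the
point `(x, 1)` of `X × [0,1]` with the point `h x` of `Y`. -/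
def MappingCylinderRel {X Y : Type*} (h : X → Y) :
    (X × unitInterval) ⊕ Y → (X × unitInterval) ⊕ Y → Prop :=
  fun a b => ∃ x : X, a = Sum.inl (x, 1) ∧ b = Sum.inr (h x)

/-- The mapping cylinder of `h : X → Y`: the quotient of `(X × [0,1]) ⊕ Y` by the
smallest equivalence relation identifying `(x, 1)` with `h x`, endowed with the
quotient topology. -/
def MappingCylinder {X Y : Type*} (h : X → Y) : Type _ :=
  Quot (MappingCylinderRel h)

instance {X Y : Type*} [TopologicalSpace X] [TopologicalSpace Y] (h : X → Y) :
    TopologicalSpace (MappingCylinder h) :=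
  instTopologicalSpaceQuot

/-- The mapping cylinder of a homeomorphism `h : X ≃ₜ Y` is homeomorphic to the
cylinder `X × [0,1]`, rel its two ends: `(x, 0)` goes to the class of `(x, 0)` in the
`X × [0,1]` summand, and `(x, 1)` goes to the class of `h x` in the `Y` summand. -/
theorem mappingCylinder_of_homeomorph
    {X Y : Type} [TopologicalSpace X] [TopologicalSpace Y] (h : X ≃ₜ Y) :
    ∃ Φ : (X × unitInterval) ≃ₜ MappingCylinder (h : X → Y),
      ∀ x : X,
        Φ (x, 0) = Quot.mk (MappingCylinderRel (h : X → Y)) (Sum.inl (x, 0)) ∧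
        Φ (x, 1) = Quot.mk (MappingCylinderRel (h : X → Y)) (Sum.inr (h x)) := by
  set r := MappingCylinderRel (h : X → Y)
  -- inverse map on the disjoint union
  set g : (X × unitInterval) ⊕ Y → X × unitInterval :=
    Sum.elim id (fun y => (h.symm y, 1)) with hg_def
  have hg : ∀ a b, r a b → g a = g b := by
    rintro a b ⟨x, rfl, rfl⟩
    simp [hg_def]
  have key : ∀ x : X, Quot.mk r (Sum.inl (x, 1)) = Quot.mk r (Sum.inr (h x)) := by
    intro x
    exact Quot.sound ⟨x, rfl, rfl⟩
  refine ⟨{ toFun := fun p => Quot.mk r (Sum.inl p)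
            invFun := Quot.lift g hg
            left_inv := fun p => rfl
            right_inv := by
              refine Quot.ind ?_
              rintro (p | y)
              · rfl
              · show Quot.mk r (Sum.inl (h.symm y, 1)) = Quot.mk r (Sum.inr y)
                have := key (h.symm y)
                simpa using this
            continuous_toFun := (continuous_quot_mk).comp continuous_inl
            continuous_invFun := by
              refine continuous_quot_lift hg ?_
              exact continuous_id.sumElim
                ((h.symm.continuous.comp continuous_id).prodMk continuous_const) },
    fun x => ⟨rfl, ?_⟩⟩
  exact key x
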